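/- A nonzero operator A ∈ B(H) is an atom for the star order (i.e., B ≤* A implies B = 0 or B = A) if and only if A has rank one. -/

import Mathlib

set_option synthInstance.maxHeartbeats 1000000
set_option maxHeartbeats 1000000

open ContinuousLinearMap

variable {H : Type*} [NormedAddCommGroup H] [InnerProductSpace ℂ H] [CompleteSpace H]

/-- The star order on bounded operators: `A ≤* B` iff `A*A = A*B` and `AA* = BA*`. -/
def starLE (A B : H →L[ℂ] H) : Prop :=
  adjoint A * A = adjoint A * B ∧ A * adjoint A = B * adjoint A

/-- The rank-one operator `x ⊗ y : z ↦ ⟨z, y⟩ x`. -/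
noncomputable def rankOne (x y : H) : H →L[ℂ] H := (innerSL ℂ y).smulRight x

local notation "⟪" x ", " y "⟫" => @inner ℂ _ _ x y

lemma rankOne_apply (x y z : H) : rankOne x y z = ⟪y, z⟫ • x := rfl

-- Case (b): two distinct nonzero spectral points of T = A†A leads to a contradiction with atomicity
theorem two_point_contra (A : H →L[ℂ] H) (hA : A ≠ 0)
    (a b : ℝ) (ha : a ∈ spectrum ℝ (adjoint A * A)) (hb : b ∈ spectrum ℝ (adjoint A * A))
    (ha0 : a ≠ 0) (hb0 : b ≠ 0) (hab : a < b)
    (atom : ∀ B : H →L[ℂ] H, starLE B A → B = 0 ∨ B = A) : False := by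
  set T : H →L[ℂ] H := adjoint A * A with hT_def
  have hT : IsSelfAdjoint T := by
    rw [hT_def, IsSelfAdjoint, star_mul, star_eq_adjoint, star_eq_adjoint, adjoint_adjoint]
  have hHnt : Nontrivial H := by
    obtain ⟨z, hz⟩ : ∃ z, A z ≠ 0 := by
      by_contra h
      push_neg at h
      exact hA (ContinuousLinearMap.ext h)
    exact nontrivial_of_ne z 0 (fun h => hz (by rw [h, map_zero]))
  have hOnt : Nontrivial (H →L[ℂ] H) := by
    obtain ⟨z, hz⟩ := exists_ne (0 : H)
    refine ⟨1, 0, fun h => hz ?_⟩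
    calc z = (1 : H →L[ℂ] H) z := rfl
    _ = (0 : H →L[ℂ] H) z := by rw [h]
    _ = 0 := rfl
  -- the two bump functions
  set c : ℝ := (a + b) / 2 with hc_def
  set f : ℝ → ℝ := fun t => max (t - c) 0 with hf_def
  set g : ℝ → ℝ := fun t => max (c - t) 0 with hg_def
  have hf : Continuous f := (continuous_id.sub continuous_const).max continuous_const
  have hg : Continuous g := (continuous_const.sub continuous_id).max continuous_const
  set F : H →L[ℂ] H := cfc f T with hF_def
  set G : H →L[ℂ] H := cfc g T with hG_def
  have hFsa : IsSelfAdjoint F := cfc_predicate f T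
  have hfg : ∀ t, f t * g t = 0 := by
    intro t
    rcases le_total t c with h | h
    · simp [hf_def, hg_def, sub_nonpos.mpr h]
    · simp [hg_def, sub_nonpos.mpr h]
  have hFG : F * G = 0 := by
    rw [hF_def, hG_def, ← cfc_mul f g T hf.continuousOn hg.continuousOn]
    calc cfc (fun t => f t * g t) T = cfc (fun _ : ℝ => (0:ℝ)) T := by
          exact cfc_congr (fun t _ => hfg t)
    _ = 0 := by rw [← Pi.zero_def, cfc_zero]
  have hTF : cfc (fun t : ℝ => t * f t) T = T * F := by
    rw [cfc_mul (fun t : ℝ => t) f T continuousOn_id hf.continuousOn, cfc_id' ℝ T]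
  have hFT : T * F = F * T := by
    have h2 : cfc (fun t : ℝ => f t * t) T = F * T := by
      rw [cfc_mul f (fun t : ℝ => t) T hf.continuousOn continuousOn_id, cfc_id' ℝ T]
    rw [← hTF, ← h2]
    exact cfc_congr (fun t _ => mul_comm t (f t))
  have hTG : cfc (fun t : ℝ => t * g t) T = T * G := by
    rw [cfc_mul (fun t : ℝ => t) g T continuousOn_id hg.continuousOn, cfc_id' ℝ T]
  -- nonvanishing
  have hTF0 : T * F ≠ 0 := by
    intro h0
    have hmap := cfc_map_spectrum (fun t : ℝ => t * f t) T hT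
      ((continuous_id.mul hf).continuousOn)
    have hbmem : b * f b ∈ spectrum ℝ (cfc (fun t : ℝ => t * f t) T) := by
      rw [hmap]; exact ⟨b, hb, rfl⟩
    rw [hTF, h0, spectrum.zero_eq] at hbmem
    have : b * f b ≠ 0 := by
      have hfb : f b = b - c := by
        rw [hf_def]
        simp only [max_eq_left_iff]
        rw [hc_def]; linarith
      rw [hfb]
      have : b - c > 0 := by rw [hc_def]; linarith
      exact mul_ne_zero hb0 (ne_of_gt this)
    exact this hbmem
  have hTG0 : T * G ≠ 0 := by
    intro h0
    have hmap := cfc_map_spectrum (fun t : ℝ => t * g t) T hT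
      ((continuous_id.mul hg).continuousOn)
    have hamem : a * g a ∈ spectrum ℝ (cfc (fun t : ℝ => t * g t) T) := by
      rw [hmap]; exact ⟨a, ha, rfl⟩
    rw [hTG, h0, spectrum.zero_eq] at hamem
    have : a * g a ≠ 0 := by
      have hga : g a = c - a := by
        rw [hg_def]
        simp only [max_eq_left_iff]
        rw [hc_def]; linarith
      rw [hga]
      have : c - a > 0 := by rw [hc_def]; linarith
      exact mul_ne_zero ha0 (ne_of_gt this)
    exact this hamem
  -- witnesses
  obtain ⟨z₀, hz₀⟩ : ∃ z, T (F z) ≠ 0 := by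
    by_contra h
    push_neg at h
    exact hTF0 (ContinuousLinearMap.ext (fun z => by simpa [mul_apply] using h z))
  obtain ⟨z₁, hz₁⟩ : ∃ z, T (G z) ≠ 0 := by
    by_contra h
    push_neg at h
    exact hTG0 (ContinuousLinearMap.ext (fun z => by simpa [mul_apply] using h z))
  set N : Submodule ℂ H := LinearMap.ker (F : H →ₗ[ℂ] H) with hN_def
  haveI : CompleteSpace N := (ContinuousLinearMap.isClosed_ker F).completeSpace_coe
  set M : Submodule ℂ H := Nᗮ with hM_def
  haveI : CompleteSpace M := N.isClosed_orthogonal.completeSpace_coe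
  have hMN : Mᗮ = N := Submodule.orthogonal_orthogonal N
  set P : H →L[ℂ] H := M.subtypeL ∘L M.orthogonalProjectionOnto with hP_def
  have hPsa : IsSelfAdjoint P := isSelfAdjoint_starProjection M
  have hPM : ∀ v, v ∈ M → P v = v := fun v hv => M.starProjection_eq_self_iff.mpr hv
  have hPN : ∀ v, v ∈ N → P v = 0 := by
    intro v hv
    have h1 : M.orthogonalProjectionOnto v = 0 :=
      Submodule.orthogonalProjectionOnto_apply_of_mem_orthogonal (hMN ▸ hv)
    show (M.subtypeL ∘L M.orthogonalProjectionOnto) v = 0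
    rw [ContinuousLinearMap.comp_apply, h1]
    rfl
  have hPidem : ∀ v, P (P v) = P v := by
    intro v
    apply hPM
    show (M.subtypeL ∘L M.orthogonalProjectionOnto) v ∈ M
    rw [ContinuousLinearMap.comp_apply]
    exact SetLike.coe_mem _
  have hTN : ∀ v, v ∈ N → T v ∈ N := by
    intro v hv
    have hFv : F v = 0 := hv
    have : F (T v) = T (F v) := by
      calc F (T v) = (F * T) v := rfl
      _ = (T * F) v := by rw [hFT]
      _ = T (F v) := rfl
    have : F (T v) = 0 := by rw [this, hFv, map_zero]
    exact this
  set B : H →L[ℂ] H := A ∘L P with hB_def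
  have hadjB : adjoint B = P ∘L adjoint A := by
    rw [hB_def, adjoint_comp, hPsa.adjoint_eq]
  have cond1 : adjoint B * B = adjoint B * A := by
    ext z
    have hmem : z - P z ∈ N := by
      rw [← hMN]
      exact M.sub_starProjection_mem_orthogonal z
    have h0 : P (T (z - P z)) = 0 := hPN _ (hTN _ hmem)
    rw [map_sub, map_sub] at h0
    have h0' : P (T z) = P (T (P z)) := by
      rwa [sub_eq_zero] at h0
    show (adjoint B) (B z) = (adjoint B) (A z)
    rw [hadjB, hB_def]
    show P (adjoint A (A (P z))) = P (adjoint A (A z))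
    have e1 : ∀ w, adjoint A (A w) = T w := fun w => rfl
    rw [e1, e1, h0']
  have cond2 : B * adjoint B = A * adjoint B := by
    ext z
    show B ((adjoint B) z) = A ((adjoint B) z)
    rw [hadjB, hB_def]
    show A (P (P (adjoint A z))) = A (P (adjoint A z))
    rw [hPidem]
  have hBne0 : B ≠ 0 := by
    set y₀ := F z₀ with hy₀_def
    have hy₀M : y₀ ∈ M := by
      rw [hM_def, Submodule.mem_orthogonal]
      intro u hu
      have hFu : F u = 0 := hu
      calc ⟪u, F z₀⟫ = ⟪adjoint F u, z₀⟫ := (adjoint_inner_left F z₀ u).symm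
      _ = ⟪F u, z₀⟫ := by rw [hFsa.adjoint_eq]
      _ = 0 := by rw [hFu, inner_zero_left]
    intro h0
    have hBy : B y₀ = A y₀ := by
      show A (P y₀) = A y₀
      rw [hPM _ hy₀M]
    have hAy : A y₀ = 0 := by rw [← hBy, h0]; rfl
    apply hz₀
    show T y₀ = 0
    rw [hT_def]
    show adjoint A (A y₀) = 0
    rw [hAy, map_zero]
  have hBneA : B ≠ A := by
    set x₀ := G z₁ with hx₀_def
    have hx₀N : x₀ ∈ N := by
      show F x₀ = 0
      calc F (G z₁) = (F * G) z₁ := rfl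
      _ = 0 := by rw [hFG]; rfl
    intro hEq
    have h1 : B x₀ = 0 := by
      show A (P x₀) = 0
      rw [hPN _ hx₀N, map_zero]
    have h2 : A x₀ ≠ 0 := by
      intro hAx
      apply hz₁
      show T x₀ = 0
      rw [hT_def]
      show adjoint A (A x₀) = 0
      rw [hAx, map_zero]
    exact h2 (by rw [← hEq, h1])
  rcases atom B ⟨cond1, cond2⟩ with h | h
  · exact hBne0 h
  · exact hBneA h


lemma adjoint_rankOne (x y : H) : adjoint (rankOne x y) = rankOne y x := by
  apply ContinuousLinearMap.ext
  intro z
  apply ext_inner_right ℂ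
  intro w
  rw [adjoint_inner_left, rankOne_apply, rankOne_apply, inner_smul_right, inner_smul_left,
    inner_conj_symm]
  ring

theorem fwd_dir (A : H →L[ℂ] H) (hA : A ≠ 0)
    (atom : ∀ B : H →L[ℂ] H, starLE B A → B = 0 ∨ B = A) :
    Module.finrank ℂ (LinearMap.range (A : H →ₗ[ℂ] H)) = 1 := by
  set T : H →L[ℂ] H := adjoint A * A with hT_def
  have hT : IsSelfAdjoint T := by
    rw [hT_def, IsSelfAdjoint, star_mul, star_eq_adjoint, star_eq_adjoint, adjoint_adjoint]
  have hT0 : T ≠ 0 := by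
    intro h
    apply hA
    ext z
    have e : ⟪z, T z⟫ = ⟪A z, A z⟫ := adjoint_inner_right A z (A z)
    rw [h] at e
    simp only [ContinuousLinearMap.zero_apply, inner_zero_right] at e
    simpa using inner_self_eq_zero.mp e.symm
  have hbex : ∃ b ∈ spectrum ℝ T, b ≠ 0 := by
    by_contra h
    push_neg at h
    apply hT0
    calc T = cfc (id : ℝ → ℝ) T := (cfc_id ℝ T).symm
    _ = cfc (fun _ : ℝ => (0:ℝ)) T := cfc_congr (fun t ht => by simpa using h t ht)
    _ = 0 := by rw [← Pi.zero_def, cfc_zero]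
  obtain ⟨b, hb, hb0⟩ := hbex
  by_cases hone : ∀ t ∈ spectrum ℝ T, t = 0 ∨ t = b
  swap
  · push_neg at hone
    obtain ⟨a, ha, ha0, hab⟩ := hone
    exfalso
    rcases lt_or_gt_of_ne hab with h | h
    · exact two_point_contra A hA a b ha hb ha0 hb0 h atom
    · exact two_point_contra A hA b a hb ha hb0 ha0 h atom
  -- single nonzero spectral point : T² = b T
  have hT2 : T * T = b • T := by
    calc T * T = cfc (fun t : ℝ => t * t) T := by
          rw [cfc_mul (fun t : ℝ => t) (fun t : ℝ => t) T continuousOn_id continuousOn_id,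
            cfc_id' ℝ T]
    _ = cfc (fun t : ℝ => b * t) T :=
          cfc_congr (fun t ht => by rcases hone t ht with h | h <;> rw [h] <;> ring)
    _ = b • T := cfc_const_mul_id b T
  obtain ⟨u, hu⟩ : ∃ u, T u ≠ 0 := by
    by_contra h
    push_neg at h
    exact hT0 (ContinuousLinearMap.ext h)
  set v : H := T u with hv_def
  have hv0 : v ≠ 0 := hu
  have hv : T v = (b:ℂ) • v := by
    have e1 : T (T u) = (b : ℝ) • (T u) := by
      calc T (T u) = (T * T) u := rfl
      _ = (b • T) u := by rw [hT2]
      _ = (b : ℝ) • T u := rfl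
    rw [hv_def, e1, ← smul_one_smul ℂ b (T u), Complex.real_smul, mul_one]
  set y : H := ((‖v‖ : ℂ))⁻¹ • v with hy_def
  have hnv : (‖v‖ : ℂ) ≠ 0 := by
    simpa using norm_ne_zero_iff.mpr hv0
  have hyy : ⟪y, y⟫ = 1 := by
    rw [hy_def, inner_smul_left, inner_smul_right, inner_self_eq_norm_sq_to_K,
      map_inv₀, Complex.conj_ofReal]
    field_simp
    rfl
  have hTy : T y = (b:ℂ) • y := by rw [hy_def, map_smul, hv, smul_comm]
  have hb2 : ⟪A y, A y⟫ = (b:ℂ) := by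
    have e : ⟪y, T y⟫ = ⟪A y, A y⟫ := adjoint_inner_right A y (A y)
    rw [← e, hTy, inner_smul_right, hyy, mul_one]
  set x : H := A y with hx_def
  have hx0 : x ≠ 0 := by
    intro h
    rw [h, inner_zero_left] at hb2
    exact hb0 (by exact_mod_cast hb2.symm)
  have hxAz : ∀ z, ⟪x, A z⟫ = (b:ℂ) * ⟪y, z⟫ := by
    intro z
    rw [hx_def]
    calc ⟪A y, A z⟫ = ⟪adjoint A (A y), z⟫ := (adjoint_inner_left A z (A y)).symm
    _ = ⟪T y, z⟫ := rfl
    _ = (b:ℂ) * ⟪y, z⟫ := by rw [hTy, inner_smul_left, Complex.conj_ofReal]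
  set B : H →L[ℂ] H := rankOne x y with hB_def
  have h1 : adjoint B * B = adjoint B * A := by
    ext z
    show (adjoint B) (B z) = (adjoint B) (A z)
    simp only [hB_def, adjoint_rankOne, rankOne_apply, inner_smul_right, smul_smul]
    rw [hb2, hxAz z]
    ring_nf
  have h2 : B * adjoint B = A * adjoint B := by
    ext z
    show B ((adjoint B) z) = A ((adjoint B) z)
    simp only [hB_def, adjoint_rankOne, rankOne_apply, map_smul, smul_smul, hyy, mul_one]
    rfl
  have hB0 : B ≠ 0 := by
    intro h
    apply hx0
    have := congrArg (fun C : H →L[ℂ] H => C y) h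
    simp only [hB_def, rankOne_apply, hyy, one_smul] at this
    exact this
  have hBA : B = A := by
    rcases atom B ⟨h1, h2⟩ with h | h
    · exact absurd h hB0
    · exact h
  refine finrank_eq_one_iff'.mpr ⟨⟨x, ⟨y, rfl⟩⟩, ?_, ?_⟩
  · intro h
    exact hx0 (Subtype.ext_iff.mp h)
  · rintro ⟨w, hw⟩
    obtain ⟨z, hz⟩ := hw
    refine ⟨⟪y, z⟫, Subtype.ext ?_⟩
    show ⟪y, z⟫ • x = w
    rw [← hz]
    show ⟪y, z⟫ • x = A z
    rw [← hBA]
    rfl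

theorem rev_dir (A : H →L[ℂ] H) (hA : A ≠ 0)
    (y x : H) (hy0 : y ≠ 0) (hy : ∀ z, A z = ⟪y, z⟫ • x) :
    ∀ B : H →L[ℂ] H, starLE B A → B = 0 ∨ B = A := by
  intro B hB
  by_cases hB0 : B = 0
  · exact Or.inl hB0
  right
  obtain ⟨h1, h2⟩ := hB
  have hyy : ⟪y, y⟫ ≠ 0 := inner_self_ne_zero.mpr hy0
  -- adjoint A formula
  have ha' : ∀ w, adjoint A w = ⟪x, w⟫ • y := by
    intro w
    apply ext_inner_right ℂ
    intro z
    rw [adjoint_inner_left, hy z, inner_smul_right, inner_smul_left, inner_conj_symm]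
    ring
  -- B*B = A*B (star of h1)
  have h1s : adjoint B * B = adjoint A * B := by
    have := congrArg star h1
    simpa [star_mul, star_eq_adjoint, adjoint_adjoint] using this
  set u := adjoint B x with hu_def
  -- key identity
  have hkey : ∀ z, ⟪y, z⟫ • u = ⟪u, z⟫ • y := by
    intro z
    have e1 : (adjoint B * A) z = ⟪y, z⟫ • u := by
      simp [mul_apply, hy z, map_smul]; rfl
    have e2 : (adjoint A * B) z = ⟪u, z⟫ • y := by
      simp only [ContinuousLinearMap.mul_apply, ha']
      rw [← adjoint_inner_left]
    rw [← e1, ← e2, ← h1, h1s]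
  have hu0 : u ≠ 0 := by
    intro hu
    apply hB0
    have hz : ∀ z, adjoint B (B z) = 0 := by
      intro z
      have : (adjoint B * B) z = (adjoint B * A) z := by rw [h1]
      simp only [ContinuousLinearMap.mul_apply] at this
      rw [this, hy z, map_smul, ← hu_def, hu, smul_zero]
    ext z
    have : ⟪B z, B z⟫ = 0 := by
      rw [← adjoint_inner_right, hz z, inner_zero_right]
    simpa using inner_self_eq_zero.mp this
  set μ : ℂ := ⟪u, y⟫ / ⟪y, y⟫ with hμ_def
  have huy : u = μ • y := by
    have := hkey y
    have h := congrArg (fun w : H => (⟪y, y⟫)⁻¹ • w) this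
    simp only [smul_smul, inv_mul_cancel₀ hyy, one_smul] at h
    rw [h, hμ_def, div_eq_inv_mul]
  have hμ0 : μ ≠ 0 := by
    intro h
    exact hu0 (by rw [huy, h, zero_smul])
  -- B*B applied
  have hBB : ∀ z, adjoint B (B z) = (⟪y, z⟫ * μ) • y := by
    intro z
    have : (adjoint B * B) z = (adjoint B * A) z := by rw [h1]
    simp only [ContinuousLinearMap.mul_apply] at this
    rw [this, hy z, map_smul, ← hu_def, huy, smul_smul]
  have hnorm : ∀ z, ⟪B z, B z⟫ = ⟪y, z⟫ * μ * ⟪z, y⟫ := by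
    intro z
    rw [← adjoint_inner_right, hBB z, inner_smul_right]
  have hperp : ∀ z, ⟪y, z⟫ = 0 → B z = 0 := by
    intro z hz
    have := hnorm z
    rw [hz, zero_mul, zero_mul] at this
    exact inner_self_eq_zero.mp this
  have hBspan : ∀ z, B z = (⟪y, z⟫ / ⟪y, y⟫) • B y := by
    intro z
    have hz' : ⟪y, z - (⟪y, z⟫ / ⟪y, y⟫) • y⟫ = 0 := by
      rw [inner_sub_right, inner_smul_right]
      field_simp; ring
    have h0 := hperp _ hz'
    rw [map_sub, map_smul, sub_eq_zero] at h0
    rw [h0]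
  have hBy0 : B y ≠ 0 := by
    intro h
    have := hnorm y
    rw [h, inner_zero_left] at this
    rcases mul_eq_zero.mp this.symm with h4 | h4
    · rcases mul_eq_zero.mp h4 with h5 | h5
      · exact hyy h5
      · exact hμ0 h5
    · exact hyy h4
  have hByx : B y = ⟪y, y⟫ • x := by
    have e1 : (B * adjoint B) (B y) = (A * adjoint B) (B y) := by rw [h2]
    simp only [ContinuousLinearMap.mul_apply] at e1
    rw [hy, adjoint_inner_right, hBB y, map_smul, hnorm y] at e1
    have hc : ⟪y, y⟫ * μ ≠ 0 := mul_ne_zero hyy hμ0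
    have h6 := congrArg (fun w : H => (⟪y, y⟫ * μ)⁻¹ • w) e1
    simp only [smul_smul, inv_mul_cancel₀ hc, one_smul] at h6
    rw [h6, ← mul_assoc, inv_mul_cancel₀ hc, one_mul]
  ext z
  rw [hBspan z, hByx, smul_smul, div_mul_cancel₀ _ hyy, hy z]


theorem atom_iff_rank_one (hdim : 2 ≤ Module.rank ℂ H)
    (A : H →L[ℂ] H) (hA : A ≠ 0) :
    (∀ B : H →L[ℂ] H, starLE B A → B = 0 ∨ B = A) ↔
      Module.finrank ℂ (LinearMap.range (A : H →ₗ[ℂ] H)) = 1 := by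
  constructor
  · exact fun atom => fwd_dir A hA atom
  · intro hr
    obtain ⟨v, hv0, hgen⟩ := finrank_eq_one_iff'.mp hr
    set x : H := (v : H) with hx_def
    have hx0 : x ≠ 0 := fun h => hv0 (Subtype.ext h)
    have hxx : ⟪x, x⟫ ≠ 0 := inner_self_ne_zero.mpr hx0
    have hxa : ∀ z, ∃ c : ℂ, A z = c • x := by
      intro z
      obtain ⟨c, hc⟩ := hgen ⟨A z, ⟨z, rfl⟩⟩
      refine ⟨c, ?_⟩
      have := congrArg Subtype.val hc
      simpa using this.symm
    set y : H := (⟪x, x⟫)⁻¹ • adjoint A x with hy_def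
    have hy : ∀ z, A z = ⟪y, z⟫ • x := by
      intro z
      obtain ⟨c, hc⟩ := hxa z
      rw [hc]
      congr 1
      rw [hy_def, inner_smul_left, adjoint_inner_left, hc, inner_smul_right, map_inv₀,
        inner_conj_symm]
      field_simp
    have hy0 : y ≠ 0 := by
      intro h
      apply hA
      ext z
      simp [hy z, h]
    exact rev_dir A hA y x hy0 hy
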